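/- Let L/K be a finite purely inseparable field extension in characteristic p > 0. Then the algebra of K-linear differential operators D(L/K) on L equals all of End_K(L). -/

import Mathlib

open Pointwise


/-- The filtration of Grothendieck differential operators on the `K`-algebra `L`:
`D_0` is the set of multiplication operators and
`D_{i+1} = {δ : [δ, l·] ∈ D_i for all l ∈ L}`. -/
def diffOpFil (K L : Type*) [Field K] [Field L] [Algebra K L] :
    ℕ → Set (Module.End K L)
  | 0 => Set.range ⇑(Algebra.lmul K L)
  | n + 1 =>
      {δ | ∀ l : L, δ * Algebra.lmul K L l - Algebra.lmul K L l * δ ∈ diffOpFil K L n}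

/-- The algebra `D(L/K)` of Grothendieck differential operators on `L` over `K`,
as a subset of `End_K(L)`: the union of the filtration `diffOpFil`. -/
def diffOps (K L : Type*) [Field K] [Field L] [Algebra K L] : Set (Module.End K L) :=
  ⋃ n, diffOpFil K L n

section aux
variable (K L : Type*) [Field K] [Field L] [Algebra K L]

noncomputable def Tcomm (l : L) : Module.End K (Module.End K L) :=
  LinearMap.mulRight K (Algebra.lmul K L l) - LinearMap.mulLeft K (Algebra.lmul K L l)

lemma Tcomm_apply (l : L) (δ : Module.End K L) :
    Tcomm K L l δ = δ * Algebra.lmul K L l - Algebra.lmul K L l * δ := by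
  simp [Tcomm]

lemma Tcomm_comm (l l' : L) : Commute (Tcomm K L l) (Tcomm K L l') := by
  set a := Algebra.lmul K L l with ha
  set b := Algebra.lmul K L l' with hb
  have hab : a * b = b * a := by
    rw [ha, hb, ← map_mul, ← map_mul, mul_comm]
  have h1 : Commute (LinearMap.mulRight K a) (LinearMap.mulRight K b) := by
    show _ * _ = _ * _
    rw [Module.End.mul_eq_comp, Module.End.mul_eq_comp, ← LinearMap.mulRight_mul,
      ← LinearMap.mulRight_mul, hab]
  have h2 : Commute (LinearMap.mulLeft K a) (LinearMap.mulLeft K b) := by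
    show _ * _ = _ * _
    rw [Module.End.mul_eq_comp, Module.End.mul_eq_comp, ← LinearMap.mulLeft_mul,
      ← LinearMap.mulLeft_mul, hab]
  exact (h1.sub_left (LinearMap.commute_mulLeft_right a b)).sub_right
    ((LinearMap.commute_mulLeft_right b a).symm.sub_left (R := Module.End K (Module.End K L)) h2)

/-- `Tcomm` as a linear map in `l`. -/
noncomputable def TcommLin : L →ₗ[K] Module.End K (Module.End K L) where
  toFun := Tcomm K L
  map_add' x y := by
    unfold Tcomm
    ext δ
    simp [mul_add, add_mul]
    abel
  map_smul' c x := by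
    unfold Tcomm
    ext δ
    simp [mul_smul_comm, smul_mul_assoc, smul_sub]

end aux

section nilp
variable (K L : Type*) [Field K] [Field L] [Algebra K L]
  (p : ℕ) [CharP K p] [IsPurelyInseparable K L]

lemma Tcomm_nilpotent (hp : p.Prime) (l : L) : IsNilpotent (Tcomm K L l) := by
  haveI := Fact.mk hp
  haveI : ExpChar K p := ExpChar.prime hp
  haveI : Nontrivial (Module.End K (Module.End K L)) := by infer_instance
  haveI : CharP (Module.End K (Module.End K L)) p :=
    charP_of_injective_algebraMap' K p
  obtain ⟨n, c, hc⟩ := IsPurelyInseparable.pow_mem K p l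
  refine ⟨p ^ n, ?_⟩
  set a := Algebra.lmul K L l with ha
  have hcomm : Commute (LinearMap.mulRight K a) (LinearMap.mulLeft K a) :=
    (LinearMap.commute_mulLeft_right a a).symm
  rw [Tcomm, sub_pow_char_pow_of_commute (R := Module.End K (Module.End K L)) p n hcomm, LinearMap.pow_mulRight,
    LinearMap.pow_mulLeft, ← map_pow, ← hc]
  have hcent : Algebra.lmul K L (algebraMap K L c)
      = algebraMap K (Module.End K L) c := by
    ext y
    simp [Algebra.smul_def]
  rw [hcent]
  ext f
  simp [Algebra.commutes c f, sub_eq_zero]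

end nilp

/-- products of many elements of a finite commuting uniformly-nilpotent family vanish -/
lemma list_prod_eq_zero_of_commute {R : Type*} [MonoidWithZero R] {d q : ℕ} (hq1 : 1 ≤ q)
    (N : Fin d → R) (hcomm : ∀ i j, Commute (N i) (N j)) (hnil : ∀ i, N i ^ q = 0)
    (ls : List R) (hmem : ∀ x ∈ ls, x ∈ Set.range N) (hlen : d * (q - 1) < ls.length) :
    ls.prod = 0 := by
  -- get an index list
  have hidx : ∀ ms : List R, (∀ x ∈ ms, x ∈ Set.range N) → ∃ il : List (Fin d), ms = il.map N := by
    intro ms hms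
    induction ms with
    | nil => exact ⟨[], rfl⟩
    | cons x xs ih =>
        obtain ⟨il, hil⟩ := ih fun y hy => hms y (List.mem_cons_of_mem x hy)
        obtain ⟨i, hi⟩ := hms x (List.mem_cons_self)
        exact ⟨i :: il, by rw [List.map_cons, hi, hil]⟩
  obtain ⟨il, rfl⟩ := hidx ls hmem
  rw [List.length_map] at hlen
  -- pigeonhole
  have hsum : ∀ ms : List (Fin d), ∑ i : Fin d, ms.count i = ms.length := by
    intro ms
    induction ms with
    | nil => simp
    | cons x xs ih =>
        simp only [List.count_cons, List.length_cons, Finset.sum_add_distrib, ih]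
        simp
  have hex : ∃ i : Fin d, q ≤ il.count i := by
    by_contra hcon
    push_neg at hcon
    have : il.length ≤ d * (q - 1) := by
      rw [← hsum il]
      calc ∑ i : Fin d, il.count i ≤ ∑ _i : Fin d, (q - 1) :=
            Finset.sum_le_sum fun i _ => Nat.le_sub_one_of_lt (hcon i)
        _ = d * (q - 1) := by simp [Finset.sum_const, mul_comm]
    omega
  obtain ⟨i, hi⟩ := hex
  have hsub : (List.replicate q i).Sublist il := List.replicate_sublist_iff.mpr hi
  obtain ⟨t, ht⟩ := hsub.exists_perm_append
  have hperm : (il.map N).Perm (List.replicate q (N i) ++ t.map N) := by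
    have := ht.map N
    rwa [List.map_append, List.map_replicate] at this
  have hpair : (il.map N).Pairwise Commute := by
    refine List.pairwise_of_forall_mem_list fun a ha b hb => ?_
    obtain ⟨x, -, rfl⟩ := List.mem_map.mp ha
    obtain ⟨y, -, rfl⟩ := List.mem_map.mp hb
    exact hcomm x y
  rw [hperm.prod_eq' hpair, List.prod_append, List.prod_replicate, hnil i, zero_mul]

lemma list_prod_mem_pow' {K A : Type*} [CommSemiring K] [Semiring A] [Algebra K A]
    (V : Submodule K A) :
    ∀ ls : List A, (∀ x ∈ ls, x ∈ V) → ls.prod ∈ V ^ ls.length := by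
  intro ls
  induction ls with
  | nil =>
      intro _
      simpa [Submodule.one_eq_span] using Submodule.mem_span_singleton_self _
  | cons x xs ih =>
      intro h
      rw [List.prod_cons, List.length_cons, pow_succ']
      exact Submodule.mul_mem_mul (h x (List.mem_cons_self))
        (ih fun y hy => h y (List.mem_cons_of_mem x hy))

section main
variable (K L : Type*) [Field K] [Field L] [Algebra K L] [FiniteDimensional K L]
  (p : ℕ) [CharP K p] [IsPurelyInseparable K L]

lemma Tcomm_prod_eq_zero (hp : p.Prime) :
    ∃ m : ℕ, ∀ ls : List L, ls.length = m → (ls.map (Tcomm K L)).prod = 0 := by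
  classical
  set d := Module.finrank K L
  obtain b := Module.finBasis K L
  set N : Fin d → Module.End K (Module.End K L) := fun i => Tcomm K L (b i) with hN
  -- uniform nilpotency exponent
  have hnil : ∀ i, ∃ k, N i ^ k = 0 := fun i => Tcomm_nilpotent K L p hp (b i)
  choose k hk using hnil
  set q := (Finset.univ.sup k) + 1 with hqdef
  have hq : ∀ i, N i ^ q = 0 := fun i =>
    pow_eq_zero_of_le (Nat.le_succ_of_le (Finset.le_sup (Finset.mem_univ i))) (hk i)
  -- every Tcomm l lies in the span of the N i
  set V : Submodule K (Module.End K (Module.End K L)) :=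
    Submodule.span K (Set.range N) with hV
  have hmemV : ∀ l : L, Tcomm K L l ∈ V := by
    intro l
    have h1 : l ∈ Submodule.span K (Set.range b) := by
      rw [b.span_eq]; trivial
    have h2 := Submodule.apply_mem_span_image_of_mem_span (TcommLin K L) h1
    rwa [← Set.range_comp] at h2
  refine ⟨d * (q - 1) + 1, fun ls hlen => ?_⟩
  have h1 : (ls.map (Tcomm K L)).prod ∈ V ^ (d * (q - 1) + 1) := by
    rw [← hlen, ← List.length_map (Tcomm K L)]
    refine list_prod_mem_pow' V _ fun x hx => ?_
    obtain ⟨l, -, rfl⟩ := List.mem_map.mp hx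
    exact hmemV l
  rw [hV, Submodule.span_pow] at h1
  have h2 : Submodule.span K ((Set.range N) ^ (d * (q - 1) + 1))
      ≤ (⊥ : Submodule K _) := by
    rw [Submodule.span_le]
    intro x hx
    obtain ⟨f, hfp⟩ := Set.mem_pow.mp hx
    have : (List.ofFn fun i => (f i : Module.End K (Module.End K L))).prod = 0 := by
      refine list_prod_eq_zero_of_commute (Nat.le_add_left 1 _) N
        (fun i j => Tcomm_comm K L (b i) (b j)) hq _ (fun x hx => ?_) ?_
      · obtain ⟨j, rfl⟩ := (List.mem_ofFn' _ _).mp hx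
        exact (f j).2
      · simp [hqdef]
    exact hfp ▸ this
  exact (Submodule.mem_bot K).mp (h2 h1)

omit [FiniteDimensional K L] [CharP K p] [IsPurelyInseparable K L] in
lemma mem_fil_of_vanish : ∀ (m : ℕ) (δ : Module.End K L),
    (∀ ls : List L, ls.length = m → ((ls.map (Tcomm K L)).prod) δ = 0) →
    δ ∈ diffOpFil K L m := by
  intro m
  induction m with
  | zero =>
      intro δ h
      have hδ : δ = 0 := by simpa using h [] rfl
      exact ⟨0, by rw [map_zero, hδ]⟩
  | succ n ih =>
      intro δ h
      intro l
      rw [← Tcomm_apply]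
      refine ih (Tcomm K L l δ) fun ls hlen => ?_
      have := h (ls ++ [l]) (by simp [hlen])
      rwa [List.map_append, List.prod_append, List.map_singleton,
        List.prod_singleton, Module.End.mul_apply] at this

end main

/-- For a finite purely inseparable extension `L/K` in characteristic `p > 0`,
the algebra of differential operators `D(L/K)` is all of `End_K(L)`. -/
theorem stmt12 (K L : Type*) [Field K] [Field L] [Algebra K L] [FiniteDimensional K L]
    (p : ℕ) (hp : p.Prime) [CharP K p] [IsPurelyInseparable K L] :
    diffOps K L = Set.univ := by
  ext δ
  simp only [Set.mem_univ, iff_true, diffOps, Set.mem_iUnion]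
  obtain ⟨m, hm⟩ := Tcomm_prod_eq_zero K L p hp
  exact ⟨m, mem_fil_of_vanish K L m δ fun ls hl => by rw [hm ls hl, LinearMap.zero_apply]⟩
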